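/- Let R be a commutative ring with 0 ≠ 1 and let P and Q be rook matrices of size l × k over R, both in pseudo-echelon form. If P and Q have the same zero rows and the same zero columns (for every i, row i of P is zero iff row i of Q is zero, and for every j, column j of P is zero iff column j of Q is zero), then P = Q. In other words, a rook matrix in pseudo-echelon form is completely determined by its zero rows and zero columns. -/
import Mathlib


/-- A rook matrix: every entry is 0 or 1, and there is at most one entry
equal to 1 in each row and in each column. -/
def IsRookMatrix {l k : ℕ} {R : Type*} [CommRing R]
    (A : Matrix (Fin l) (Fin k) R) : Prop :=
  (∀ i j, A i j = 0 ∨ A i j = 1) ∧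
  (∀ i j j', A i j = 1 → A i j' = 1 → j = j') ∧
  (∀ i i' j, A i j = 1 → A i' j = 1 → i = i')

/-- Pseudo-echelon form: if rows `i < i'` contain nonzero entries in columns
`j` and `j'` respectively, then `j < j'`. -/
def IsPseudoEchelon {l k : ℕ} {R : Type*} [CommRing R]
    (A : Matrix (Fin l) (Fin k) R) : Prop :=
  ∀ i i' j j', i < i' → A i j ≠ 0 → A i' j' ≠ 0 → j < j'

/-- A permutation matrix: the 0–1 matrix of some permutation `σ`, with
entry 1 exactly in the positions `(σ j, j)`. -/
def IsPermMatrix {n : ℕ} {R : Type*} [CommRing R]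
    (S : Matrix (Fin n) (Fin n) R) : Prop :=
  ∃ σ : Equiv.Perm (Fin n), ∀ i j, S i j = if i = σ j then 1 else 0

/-- The matrix `[f]` associated to a partial equivalence (rook diagram)
`f : PEquiv (Fin k) (Fin l)`: the `(q, p)` entry is 1 if `f p = q` and 0
otherwise. -/
def rookMatrixOf {k l : ℕ} (R : Type*) [CommRing R]
    (f : PEquiv (Fin k) (Fin l)) : Matrix (Fin l) (Fin k) R :=
  fun q p => if f p = some q then 1 else 0

/-- A partial equivalence (rook diagram) is monotone (planar) if for all
`p, q` in its domain, `p < q` implies `f p < f q`. -/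
def IsMonotonePE {k l : ℕ} (f : PEquiv (Fin k) (Fin l)) : Prop :=
  ∀ p q i j, i ∈ f p → j ∈ f q → p < q → i < j

lemma pseudoEchelon_aux {l k : ℕ} {R : Type*} [CommRing R] [Nontrivial R]
    (P Q : Matrix (Fin l) (Fin k) R)
    (hP : IsRookMatrix P) (hQ : IsRookMatrix Q)
    (hPe : IsPseudoEchelon P) (hQe : IsPseudoEchelon Q)
    (hrows : ∀ i, (∀ j, P i j = 0) ↔ (∀ j, Q i j = 0))
    (hcols : ∀ j, (∀ i, P i j = 0) ↔ (∀ i, Q i j = 0))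
    (i : Fin l) (IH : ∀ i'' j, i'' < i → P i'' j = Q i'' j)
    (j : Fin k) (hPij : P i j = 1) (hQij : Q i j = 0) : False := by
  have hrow : ¬ ∀ j, Q i j = 0 := by
    intro h
    have := (hrows i).mpr h j
    rw [hPij] at this
    exact one_ne_zero this
  push_neg at hrow
  obtain ⟨j', hj'⟩ := hrow
  have hQij' : Q i j' = 1 := (hQ.1 i j').resolve_left hj'
  have hcolj : ¬ ∀ a, Q a j = 0 := by
    intro h
    have hp := (hcols j).mpr h i
    rw [hPij] at hp
    exact one_ne_zero hp
  push_neg at hcolj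
  obtain ⟨i', hi'⟩ := hcolj
  have hQi'j : Q i' j = 1 := (hQ.1 i' j).resolve_left hi'
  have hii' : i ≠ i' := by
    rintro rfl
    rw [hQij] at hQi'j
    exact one_ne_zero hQi'j.symm
  rcases lt_or_gt_of_ne hii' with h | h
  · have hjj' : j' < j := hQe i i' j' j h hj' hi'
    have hcolj' : ¬ ∀ a, P a j' = 0 := by
      intro hp
      have := (hcols j').mp hp i
      rw [hQij'] at this
      exact one_ne_zero this
    push_neg at hcolj'
    obtain ⟨i₂, hi₂⟩ := hcolj'
    have hPi₂ : P i₂ j' = 1 := (hP.1 i₂ j').resolve_left hi₂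
    rcases lt_trichotomy i₂ i with h2 | h2 | h2
    · have heq := IH i₂ j' h2
      rw [hPi₂] at heq
      have := hQ.2.2 i₂ i j' heq.symm hQij'
      exact absurd h2 (by rw [this]; exact lt_irrefl i)
    · subst h2
      have := hP.2.1 i₂ j j' hPij hPi₂
      exact absurd hjj' (by rw [this]; exact lt_irrefl j')
    · have := hPe i i₂ j j' h2 (hPij ▸ one_ne_zero) hi₂
      exact absurd (hjj'.trans this) (lt_irrefl j')
  · have heq := IH i' j h
    rw [hQi'j] at heq
    exact hii' (hP.2.2 i i' j hPij heq)

theorem pseudoEchelon_rookMatrix_unique {l k : ℕ} {R : Type*} [CommRing R]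
    [Nontrivial R] (P Q : Matrix (Fin l) (Fin k) R)
    (hP : IsRookMatrix P) (hQ : IsRookMatrix Q)
    (hPe : IsPseudoEchelon P) (hQe : IsPseudoEchelon Q)
    (hrows : ∀ i, (∀ j, P i j = 0) ↔ (∀ j, Q i j = 0))
    (hcols : ∀ j, (∀ i, P i j = 0) ↔ (∀ i, Q i j = 0)) :
    P = Q := by
  have main : ∀ n : ℕ, ∀ i : Fin l, i.val = n → ∀ j, P i j = Q i j := by
    intro n
    induction n using Nat.strong_induction_on with
    | _ n IH =>
      intro i hi j
      have IH' : ∀ i'' j, i'' < i → P i'' j = Q i'' j := fun i'' j h =>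
        IH i''.val (hi ▸ h) i'' rfl j
      rcases hP.1 i j with h0 | h1 <;> rcases hQ.1 i j with h0' | h1'
      · rw [h0, h0']
      · exact absurd (pseudoEchelon_aux Q P hQ hP hQe hPe (fun a => (hrows a).symm)
          (fun a => (hcols a).symm) i (fun a b hab => (IH' a b hab).symm) j h1' h0) id
      · exact absurd (pseudoEchelon_aux P Q hP hQ hPe hQe hrows hcols i IH' j h1 h0') id
      · rw [h1, h1']
  ext i j
  exact main i.val i rfl j
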